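/- The Laurent polynomial t³ − t² + t − 1 + t⁻¹ − t⁻² + t⁻³ cannot be written as c·f(t)·f(t⁻¹) for any nonzero rational c and f ∈ ℚ[t,t⁻¹]. -/

import Mathlib

open LaurentPolynomial

/-- Evaluation of a Laurent polynomial at a unit `u : ℚˣ`. -/
noncomputable def evalU (u : ℚˣ) : LaurentPolynomial ℚ →ₐ[ℚ] ℚ :=
  AddMonoidAlgebra.lift ℚ ℚ ℤ ((Units.coeHom ℚ).comp (zpowersHom ℚˣ u))

lemma evalU_T (u : ℚˣ) (n : ℤ) : evalU u (T n) = ((u ^ n : ℚˣ) : ℚ) := by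
  rw [evalU, T, AddMonoidAlgebra.lift_single]
  simp

lemma evalU_invert (u : ℚˣ) (f : LaurentPolynomial ℚ) :
    evalU u (invert f) = evalU u⁻¹ f := by
  have : (evalU u).comp invert.toAlgHom = evalU u⁻¹ := by
    apply AddMonoidAlgebra.algHom_ext
    intro n
    have h1 : (AddMonoidAlgebra.single n 1 : LaurentPolynomial ℚ) = T n := rfl
    simp [h1, evalU_T, zpow_neg]
    exact AlgHom.ext fun x => (AlgHom.commutes _ x).trans (AlgHom.commutes _ x).symm
  exact congrFun (congrArg DFunLike.coe this) f

theorem not_exists_symmetric_factorization_deg3 :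
    ¬ ∃ (c : ℚ) (f : LaurentPolynomial ℚ), c ≠ 0 ∧
      (T 3 - T 2 + T 1 - 1 + T (-1) - T (-2) + T (-3) : LaurentPolynomial ℚ) =
        c • (f * invert f) := by
  rintro ⟨c, f, hc, hf⟩
  have h1 := congrArg (evalU 1) hf
  have h2 := congrArg (evalU (-1)) hf
  simp only [map_sub, map_add, map_smul, map_mul, map_one, evalU_T, evalU_invert] at h1 h2
  norm_num at h1 h2
  set a := evalU 1 f
  set b := evalU (-1) f
  -- h1 : 1 = c * (a * a), h2 : -7 = c * (b * b)  (roughly)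
  nlinarith [sq_nonneg (a * b), sq_nonneg c, sq_nonneg (c * a * b), h1, h2]
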